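/- Let μ ≥ 1 and let a_1, ..., a_N be real numbers with 1 ≤ a_i ≤ μ for each i. Then (1/N)∑_{i=1}^N log a_i − (1/N)∑_{i=1}^N log( (1/i)∑_{j=1}^i a_j ) ≤ log(log μ + 1) + 1, where log denotes the natural logarithm. -/

import Mathlib

open Finset

lemma choose_mul_pow_le' (c n k : ℕ) (hk : k ≤ n) :
    n.choose k * c ^ (n - k) ≤ (c + 1) ^ n := by
  rw [add_pow]
  have hmem : n - k ∈ Finset.range (n + 1) := Finset.mem_range.mpr (by omega)
  calc n.choose k * c ^ (n - k)
      = c ^ (n - k) * 1 ^ (n - (n - k)) * n.choose (n - k) := by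
        rw [Nat.choose_symm hk, one_pow]; ring
    _ ≤ ∑ j ∈ Finset.range (n + 1), c ^ j * 1 ^ (n - j) * n.choose j :=
        Finset.single_le_sum (f := fun j => c ^ j * 1 ^ (n - j) * n.choose j)
          (fun j _ => Nat.zero_le _) hmem

lemma factorial_sum_le' {β : Type*} [DecidableEq β] (s : Finset β) (b : β → ℕ) :
    (∑ k ∈ s, b k).factorial ≤ s.card ^ (∑ k ∈ s, b k) * ∏ k ∈ s, (b k).factorial := by
  induction s using Finset.induction_on with
  | empty => simp
  | insert x s hx ih =>
    rw [Finset.sum_insert hx, Finset.prod_insert hx, Finset.card_insert_of_notMem hx]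
    set K := b x with hK
    set S := ∑ k ∈ s, b k with hS
    set c := s.card with hc
    have h1 : (K + S).choose S * K.factorial * S.factorial = (K + S).factorial :=
      Nat.add_choose_mul_factorial_mul_factorial K S
    have h2 : (K + S).choose S * c ^ S ≤ (c + 1) ^ (K + S) := by
      have h3 := choose_mul_pow_le' c (K + S) K (Nat.le_add_right _ _)
      rw [Nat.add_sub_cancel_left] at h3
      have hsymm : (K + S).choose S = (K + S).choose K := by
        rw [← Nat.choose_symm (Nat.le_add_right K S), Nat.add_sub_cancel_left]
      rwa [hsymm]
    calc (K + S).factorial = (K + S).choose S * K.factorial * S.factorial := h1.symm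
      _ ≤ (K + S).choose S * K.factorial * (c ^ S * ∏ k ∈ s, (b k).factorial) :=
          Nat.mul_le_mul_left _ ih
      _ = ((K + S).choose S * c ^ S) * (K.factorial * ∏ k ∈ s, (b k).factorial) := by ring
      _ ≤ (c + 1) ^ (K + S) * (K.factorial * ∏ k ∈ s, (b k).factorial) :=
          Nat.mul_le_mul_right _ h2

lemma prod_rank' {α : Type*} [LinearOrder α] :
    ∀ (n : ℕ) (s : Finset α), s.card = n →
      (∏ i ∈ s, (s.filter (fun j => j ≤ i)).card) = n.factorial := by
  intro n
  induction n with
  | zero => intro s hs; simp [Finset.card_eq_zero.mp hs]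
  | succ n ih =>
    intro s hs
    have hne : s.Nonempty := Finset.card_pos.mp (by omega)
    set M := s.max' hne with hM
    have hMs : M ∈ s := s.max'_mem hne
    have hcard : (s.erase M).card = n := by simp [Finset.card_erase_of_mem hMs, hs]
    have hstep : ∀ i ∈ s.erase M,
        (s.filter (fun j => j ≤ i)).card = ((s.erase M).filter (fun j => j ≤ i)).card := by
      intro i hi
      congr 1
      ext j
      simp only [Finset.mem_filter, Finset.mem_erase]
      constructor
      · rintro ⟨hjs, hji⟩
        refine ⟨⟨?_, hjs⟩, hji⟩
        rintro rfl
        have hiM : i ≤ M := s.le_max' i (Finset.mem_of_mem_erase hi)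
        exact (Finset.mem_erase.mp hi).1 (le_antisymm hiM hji)
      · rintro ⟨⟨_, hjs⟩, hji⟩; exact ⟨hjs, hji⟩
    calc (∏ i ∈ s, (s.filter (fun j => j ≤ i)).card)
        = (s.filter (fun j => j ≤ M)).card *
            ∏ i ∈ s.erase M, (s.filter (fun j => j ≤ i)).card :=
          (Finset.mul_prod_erase s _ hMs).symm
      _ = s.card * ∏ i ∈ s.erase M, ((s.erase M).filter (fun j => j ≤ i)).card := by
          rw [Finset.prod_congr rfl hstep, Finset.filter_true_of_mem (fun j hj => s.le_max' j hj)]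
      _ = (n + 1) * n.factorial := by rw [hs, ih _ hcard]
      _ = (n + 1).factorial := rfl

theorem prefix_average_log_inequality
    (N : ℕ) (hN : 0 < N) (μ : ℝ) (hμ : 1 ≤ μ)
    (a : Fin N → ℝ)
    (ha : ∀ i, 1 ≤ a i ∧ a i ≤ μ) :
    (1 / N) * (∑ i, Real.log (a i)) -
      (1 / N) * (∑ i : Fin N, Real.log
        ((1 / ((i : ℕ) + 1 : ℝ)) * ∑ j ∈ Finset.univ.filter (fun j => j ≤ i), a j)) ≤
      Real.log (Real.log μ + 1) + 1 := by
  set L := Real.log μ with hLdef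
  have hL0 : 0 ≤ L := Real.log_nonneg hμ
  set m : ℕ := max 1 ⌈L⌉₊ with hmdef
  have hm1 : 1 ≤ m := le_max_left _ _
  have hm0 : (0:ℝ) < m := by exact_mod_cast hm1
  have hmL : L ≤ (m : ℝ) := by
    refine le_trans (Nat.le_ceil L) ?_
    exact_mod_cast le_max_right 1 ⌈L⌉₊
  have hmL1 : (m : ℝ) ≤ L + 1 := by
    rcases max_cases 1 ⌈L⌉₊ with ⟨he, _⟩ | ⟨he, hlt⟩
    · rw [hmdef, he]; push_cast; linarith
    · rw [hmdef, he]
      have : (⌈L⌉₊ : ℝ) < L + 1 := Nat.ceil_lt_add_one hL0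
      linarith
  set h : ℝ := L / m with hhdef
  have hh0 : 0 ≤ h := div_nonneg hL0 (le_of_lt hm0)
  have hmh : (m : ℝ) * h = L := by rw [hhdef]; field_simp
  have hh1 : h ≤ 1 := by
    rw [hhdef, div_le_one hm0]; exact hmL
  -- values
  have ha0 : ∀ i, (0:ℝ) < a i := fun i => lt_of_lt_of_le one_pos (ha i).1
  have ht0 : ∀ i, 0 ≤ Real.log (a i) := fun i => Real.log_nonneg (ha i).1
  have htL : ∀ i, Real.log (a i) ≤ L := fun i => Real.log_le_log (ha0 i) (ha i).2
  -- buckets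
  set κ : Fin N → ℕ := fun i => max 1 ⌈Real.log (a i) / h⌉₊ with hκdef
  have hκmem : ∀ i, κ i ∈ Finset.Icc 1 m := by
    intro i
    rw [Finset.mem_Icc]
    refine ⟨le_max_left _ _, max_le hm1 ?_⟩
    rw [Nat.ceil_le]
    rcases eq_or_lt_of_le hh0 with hz | hpos
    · rw [← hz, div_zero]; exact le_of_lt hm0
    · rw [div_le_iff₀ hpos, hmh]; exact htL i
  have hbound : ∀ i, Real.log (a i) ≤ (κ i : ℝ) * h := by
    intro i
    rcases eq_or_lt_of_le hh0 with hz | hpos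
    · have : L = 0 := by
        have := hmh; rw [← hz, mul_zero] at this; linarith
      have h1 := htL i; have h2 := ht0 i
      rw [← hz, mul_zero]; linarith
    · have h1 : Real.log (a i) / h ≤ (⌈Real.log (a i) / h⌉₊ : ℝ) := Nat.le_ceil _
      have h2 : (⌈Real.log (a i) / h⌉₊ : ℝ) ≤ (κ i : ℝ) := by
        exact_mod_cast le_max_right 1 ⌈Real.log (a i) / h⌉₊
      rw [← div_le_iff₀ hpos] at *
      linarith
  have hlow : ∀ j, (κ j : ℝ) * h ≤ Real.log (a j) + h := by
    intro j
    by_cases hc : ⌈Real.log (a j) / h⌉₊ ≤ 1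
    · have : κ j = 1 := by rw [hκdef]; simp [max_eq_left hc]
      rw [this]
      have := ht0 j
      push_cast
      linarith
    · push_neg at hc
      have hκj : κ j = ⌈Real.log (a j) / h⌉₊ := max_eq_right (le_of_lt hc)
      have hpos : 0 < h := by
        rcases eq_or_lt_of_le hh0 with hz | hpos
        · exfalso; rw [← hz, div_zero] at hc; simp at hc
        · exact hpos
      have hceil : (⌈Real.log (a j) / h⌉₊ : ℝ) < Real.log (a j) / h + 1 :=
        Nat.ceil_lt_add_one (div_nonneg (ht0 j) hh0)
      rw [hκj]
      have := (mul_lt_mul_of_pos_right hceil hpos).le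
      calc (⌈Real.log (a j) / h⌉₊ : ℝ) * h ≤ (Real.log (a j) / h + 1) * h := this
        _ = Real.log (a j) + h := by field_simp
  -- ranks
  set r : Fin N → ℕ := fun i => (univ.filter (fun j => j ≤ i ∧ κ j = κ i)).card with hrdef
  have hr1 : ∀ i, 1 ≤ r i := by
    intro i
    apply Finset.card_pos.mpr
    exact ⟨i, by simp⟩
  have hr0 : ∀ i, (0:ℝ) < (r i : ℝ) := by
    intro i; exact_mod_cast hr1 i
  -- per-index key inequality
  have key : ∀ i : Fin N,
      Real.log (a i) - Real.log ((1 / ((i : ℕ) + 1 : ℝ)) * ∑ j ∈ univ.filter (fun j => j ≤ i), a j)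
        ≤ h + Real.log ((i : ℕ) + 1 : ℝ) - Real.log (r i) := by
    intro i
    have hi1 : (0:ℝ) < (i : ℕ) + 1 := by positivity
    have hsum : (r i : ℝ) * Real.exp (Real.log (a i) - h)
        ≤ ∑ j ∈ univ.filter (fun j => j ≤ i), a j := by
      calc (r i : ℝ) * Real.exp (Real.log (a i) - h)
          = ∑ _j ∈ univ.filter (fun j => j ≤ i ∧ κ j = κ i), Real.exp (Real.log (a i) - h) := by
            rw [Finset.sum_const, nsmul_eq_mul, hrdef]
        _ ≤ ∑ j ∈ univ.filter (fun j => j ≤ i ∧ κ j = κ i), a j := by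
            apply Finset.sum_le_sum
            intro j hj
            have hκeq : κ j = κ i := (Finset.mem_filter.mp hj).2.2
            have : Real.log (a i) - h ≤ Real.log (a j) := by
              have h1 := hbound i
              have h2 := hlow j
              rw [hκeq] at h2
              linarith
            calc Real.exp (Real.log (a i) - h) ≤ Real.exp (Real.log (a j)) := Real.exp_le_exp.mpr this
              _ = a j := Real.exp_log (ha0 j)
        _ ≤ ∑ j ∈ univ.filter (fun j => j ≤ i), a j := by
            apply Finset.sum_le_sum_of_subset_of_nonneg
            · intro j hj
              simp only [Finset.mem_filter] at *
              exact ⟨hj.1, hj.2.1⟩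
            · intro j _ _; exact le_of_lt (ha0 j)
    have hlog : Real.log ((r i : ℝ) * Real.exp (Real.log (a i) - h) / (((i : ℕ) : ℝ) + 1))
        ≤ Real.log ((1 / ((i : ℕ) + 1 : ℝ)) * ∑ j ∈ univ.filter (fun j => j ≤ i), a j) := by
      apply Real.log_le_log
      · exact div_pos (mul_pos (hr0 i) (Real.exp_pos _)) hi1
      · rw [div_eq_mul_inv, mul_comm, ← one_div]
        apply mul_le_mul_of_nonneg_left hsum
        positivity
    rw [Real.log_div (ne_of_gt (mul_pos (hr0 i) (Real.exp_pos _))) (ne_of_gt hi1),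
        Real.log_mul (ne_of_gt (hr0 i)) (Real.exp_ne_zero _), Real.log_exp] at hlog
    linarith
  -- sums of logs
  have hprod1 : (∏ i : Fin N, (((i : ℕ) : ℝ) + 1)) = (N.factorial : ℝ) := by
    rw [Fin.prod_univ_eq_prod_range (fun i => ((i : ℝ) + 1))]
    exact_mod_cast Finset.prod_range_add_one_eq_factorial N
  have hsumlog1 : (∑ i : Fin N, Real.log (((i : ℕ) : ℝ) + 1)) = Real.log (N.factorial : ℝ) := by
    rw [← hprod1]
    exact (Real.log_prod (fun i _ => by positivity)).symm
  have hsumlog2 : (∑ i : Fin N, Real.log (r i : ℝ)) = Real.log (∏ i : Fin N, (r i : ℝ)) :=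
    (Real.log_prod (fun i _ => ne_of_gt (hr0 i))).symm
  -- combinatorial bound
  have hNat : N.factorial ≤ m ^ N * ∏ i : Fin N, r i := by
    have hmaps : ∀ i : Fin N, i ∈ univ → κ i ∈ Finset.Icc 1 m := fun i _ => hκmem i
    have hcardsum : N = ∑ k ∈ Finset.Icc 1 m, (univ.filter (fun i => κ i = k)).card := by
      rw [← Finset.card_eq_sum_card_fiberwise hmaps, Finset.card_univ, Fintype.card_fin]
    have hfib : (∏ k ∈ Finset.Icc 1 m, ∏ i ∈ univ.filter (fun i => κ i = k), r i)
        = ∏ i : Fin N, r i := Finset.prod_fiberwise_of_maps_to hmaps r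
    have hinner : ∀ k ∈ Finset.Icc 1 m, (∏ i ∈ univ.filter (fun i => κ i = k), r i)
        = ((univ.filter (fun i => κ i = k)).card).factorial := by
      intro k _
      have hri : ∀ i ∈ univ.filter (fun i => κ i = k),
          r i = ((univ.filter (fun i => κ i = k)).filter (fun j => j ≤ i)).card := by
        intro i hi
        have hk : κ i = k := (Finset.mem_filter.mp hi).2
        show (univ.filter (fun j => j ≤ i ∧ κ j = κ i)).card = _
        rw [Finset.filter_filter]
        congr 1
        ext j
        simp only [Finset.mem_filter, Finset.mem_univ, true_and, hk]
        tauto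
      rw [Finset.prod_congr rfl hri]
      exact prod_rank' _ _ rfl
    calc N.factorial
        = (∑ k ∈ Finset.Icc 1 m, (univ.filter (fun i => κ i = k)).card).factorial := by
          rw [← hcardsum]
      _ ≤ (Finset.Icc 1 m).card ^ (∑ k ∈ Finset.Icc 1 m, (univ.filter (fun i => κ i = k)).card)
            * ∏ k ∈ Finset.Icc 1 m, ((univ.filter (fun i => κ i = k)).card).factorial :=
          factorial_sum_le' _ _
      _ = m ^ N * ∏ i : Fin N, r i := by
          rw [Nat.card_Icc, ← hcardsum, ← hfib, Finset.prod_congr rfl hinner]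
          norm_num
  have hlogNat : Real.log (N.factorial : ℝ) ≤ N * Real.log m + Real.log (∏ i : Fin N, (r i : ℝ)) := by
    have hprodpos : (0:ℝ) < ∏ i : Fin N, (r i : ℝ) := Finset.prod_pos (fun i _ => hr0 i)
    have hcast : (N.factorial : ℝ) ≤ (m : ℝ) ^ N * ∏ i : Fin N, (r i : ℝ) := by
      exact_mod_cast hNat
    calc Real.log (N.factorial : ℝ) ≤ Real.log ((m : ℝ) ^ N * ∏ i : Fin N, (r i : ℝ)) :=
          Real.log_le_log (by exact_mod_cast N.factorial_pos) hcast
      _ = N * Real.log m + Real.log (∏ i : Fin N, (r i : ℝ)) := by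
          rw [Real.log_mul (by positivity) (ne_of_gt hprodpos), Real.log_pow]
  -- assemble
  have hNpos : (0:ℝ) < N := by exact_mod_cast hN
  have main : (∑ i, Real.log (a i)) -
      (∑ i : Fin N, Real.log ((1 / ((i : ℕ) + 1 : ℝ)) * ∑ j ∈ univ.filter (fun j => j ≤ i), a j))
      ≤ N * (Real.log (L + 1) + 1) := by
    have hsum := Finset.sum_le_sum (fun i (_ : i ∈ univ) => key i)
    have hrhs : (∑ i : Fin N, (h + Real.log (((i : ℕ) : ℝ) + 1) - Real.log (r i)))
        = N * h + Real.log (N.factorial : ℝ) - ∑ i : Fin N, Real.log (r i : ℝ) := by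
      rw [Finset.sum_sub_distrib, Finset.sum_add_distrib, Finset.sum_const, Finset.card_univ,
        Fintype.card_fin, nsmul_eq_mul, hsumlog1]
    have hlogm : Real.log (m : ℝ) ≤ Real.log (L + 1) :=
      Real.log_le_log hm0 hmL1
    have hstep : N * h + Real.log (N.factorial : ℝ) - ∑ i : Fin N, Real.log (r i : ℝ)
        ≤ N * (Real.log (L + 1) + 1) := by
      rw [hsumlog2]
      have h1 : Real.log (N.factorial : ℝ) - Real.log (∏ i : Fin N, (r i : ℝ))
          ≤ N * Real.log m := by linarith
      have h2 : (N:ℝ) * h ≤ N * 1 := by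
        apply mul_le_mul_of_nonneg_left hh1 (le_of_lt hNpos)
      have h3 : (N:ℝ) * Real.log m ≤ N * Real.log (L + 1) :=
        mul_le_mul_of_nonneg_left hlogm (le_of_lt hNpos)
      linarith
    rw [← Finset.sum_sub_distrib]
    calc (∑ i : Fin N, (Real.log (a i) -
          Real.log ((1 / ((i : ℕ) + 1 : ℝ)) * ∑ j ∈ univ.filter (fun j => j ≤ i), a j)))
        ≤ ∑ i : Fin N, (h + Real.log (((i : ℕ) : ℝ) + 1) - Real.log (r i)) := hsum
      _ = N * h + Real.log (N.factorial : ℝ) - ∑ i : Fin N, Real.log (r i : ℝ) := hrhs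
      _ ≤ N * (Real.log (L + 1) + 1) := hstep
  rw [← mul_sub]
  calc (1 / (N:ℝ)) * ((∑ i, Real.log (a i)) -
        (∑ i : Fin N, Real.log ((1 / ((i : ℕ) + 1 : ℝ)) * ∑ j ∈ univ.filter (fun j => j ≤ i), a j)))
      ≤ (1 / (N:ℝ)) * (N * (Real.log (L + 1) + 1)) := by
        apply mul_le_mul_of_nonneg_left main (by positivity)
    _ = Real.log (L + 1) + 1 := by field_simp
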